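/- Let F be a field and ∂ : F → F an additive map satisfying the Leibniz rule ∂(fg) = f·∂(g) + g·∂(f), such that ∂(x) = 1 for some x ∈ F. Let M be an F-vector space of finite dimension μ and D : M → M an additive map with D(f·m) = ∂(f)·m + f·D(m) for all f ∈ F, m ∈ M. If char F = 0 or μ ≤ char F, then there exists m ∈ M such that (m, D(m), …, D^{μ−1}(m)) is a basis of M (a cyclic basis). -/

import Mathlib

open Function Finset Polynomial Module

namespace Stmt4Aux

variable {F M : Type*} [Field F] [AddCommGroup M] [Module F M]

theorem dd_zero (dd : F → F) (hadd : ∀ f g : F, dd (f + g) = dd f + dd g) : dd 0 = 0 := by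
  have h := hadd 0 0
  rw [add_zero] at h
  exact add_eq_left.mp h.symm

theorem dd_one (dd : F → F) (hmul : ∀ f g : F, dd (f * g) = f * dd g + g * dd f) : dd 1 = 0 := by
  have h := hmul 1 1
  simp only [mul_one, one_mul] at h
  exact add_eq_left.mp h.symm

theorem dd_natCast (dd : F → F) (hadd : ∀ f g : F, dd (f + g) = dd f + dd g)
    (hmul : ∀ f g : F, dd (f * g) = f * dd g + g * dd f) (n : ℕ) : dd (n : F) = 0 := by
  induction n with
  | zero => exact_mod_cast dd_zero dd hadd
  | succ n ih =>
    push_cast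
    rw [hadd, ih, dd_one dd hmul, add_zero]

theorem dd_pow_succ (dd : F → F)
    (hmul : ∀ f g : F, dd (f * g) = f * dd g + g * dd f) {x : F} (hx : dd x = 1) (s : ℕ) :
    dd (x ^ (s + 1)) = (s + 1 : F) * x ^ s := by
  induction s with
  | zero => simp [hx]
  | succ s ih =>
    have : x ^ (s + 1 + 1) = x * x ^ (s + 1) := by ring
    rw [this, hmul, ih, hx, pow_succ]
    push_cast
    ring

theorem dd_iter_pow (dd : F → F) (hadd : ∀ f g : F, dd (f + g) = dd f + dd g)
    (hmul : ∀ f g : F, dd (f * g) = f * dd g + g * dd f) {x : F} (hx : dd x = 1) (j m : ℕ) :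
    dd^[m] (x ^ j) = (j.descFactorial m : F) * x ^ (j - m) := by
  induction m with
  | zero => simp
  | succ m ih =>
    rw [Function.iterate_succ_apply', ih, hmul, dd_natCast dd hadd hmul, mul_zero, add_zero]
    rcases h : j - m with _ | t
    · have hjm : j < m + 1 := Nat.lt_succ_of_le (Nat.le_of_sub_eq_zero h)
      rw [pow_zero, dd_one dd hmul, mul_zero, Nat.descFactorial_eq_zero_iff_lt.mpr hjm]
      simp
    · rw [dd_pow_succ dd hmul hx t, Nat.descFactorial_succ, h]
      have : j - (m + 1) = t := by omega
      rw [this]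
      push_cast
      ring

theorem D_zero (D : M → M) (hDadd : ∀ m m' : M, D (m + m') = D m + D m') : D 0 = 0 := by
  have h := hDadd 0 0
  rw [add_zero] at h
  exact add_eq_left.mp h.symm

theorem D_sum (D : M → M) (hDadd : ∀ m m' : M, D (m + m') = D m + D m')
    {α : Type*} (s : Finset α) (g : α → M) :
    D (∑ i ∈ s, g i) = ∑ i ∈ s, D (g i) :=
  map_sum (AddMonoidHom.mk' D hDadd) g s

theorem D_iter_add (D : M → M) (hDadd : ∀ m m' : M, D (m + m') = D m + D m')
    (i : ℕ) (m m' : M) : D^[i] (m + m') = D^[i] m + D^[i] m' := by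
  induction i with
  | zero => simp
  | succ i ih => rw [Function.iterate_succ_apply', Function.iterate_succ_apply',
      Function.iterate_succ_apply', ih, hDadd]

theorem D_iter_const_smul (dd : F → F) (D : M → M)
    (hDLeib : ∀ (f : F) (m : M), D (f • m) = dd f • m + f • D m)
    {c : F} (hc : dd c = 0) (i : ℕ) (m : M) : D^[i] (c • m) = c • D^[i] m := by
  induction i with
  | zero => simp
  | succ i ih => rw [Function.iterate_succ_apply', Function.iterate_succ_apply', ih,
      hDLeib, hc, zero_smul, zero_add]

theorem D_iter_smul (dd : F → F) (D : M → M)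
    (hddadd : ∀ f g : F, dd (f + g) = dd f + dd g)
    (hddmul : ∀ f g : F, dd (f * g) = f * dd g + g * dd f)
    (hDadd : ∀ m m' : M, D (m + m') = D m + D m')
    (hDLeib : ∀ (f : F) (m : M), D (f • m) = dd f • m + f • D m)
    (i : ℕ) (h : F) (m : M) :
    D^[i] (h • m) = ∑ r ∈ Finset.range (i + 1), ((i.choose r : F) * dd^[r] h) • D^[i - r] m := by
  induction i with
  | zero => simp
  | succ i ih =>
    rw [Function.iterate_succ_apply', ih, D_sum D hDadd]
    have hterm : ∀ r ∈ Finset.range (i + 1),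
        D (((i.choose r : F) * dd^[r] h) • D^[i - r] m)
          = ((i.choose r : F) * dd^[r + 1] h) • D^[i - r] m
            + ((i.choose r : F) * dd^[r] h) • D^[(i + 1) - r] m := by
      intro r hr
      rw [Finset.mem_range] at hr
      have h1 : dd ((i.choose r : F) * dd^[r] h) = (i.choose r : F) * dd^[r + 1] h := by
        rw [hddmul, dd_natCast dd hddadd hddmul, mul_zero, add_zero,
          Function.iterate_succ_apply']
      have h2 : D (D^[i - r] m) = D^[(i + 1) - r] m := by
        have : (i + 1) - r = (i - r) + 1 := by omega
        rw [this, Function.iterate_succ_apply']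
      rw [hDLeib, h1, h2]
    rw [Finset.sum_congr rfl hterm, Finset.sum_add_distrib]
    -- now : S1 + S2 = T
    set g : ℕ → M := fun r => ((i.choose r : F) * dd^[r] h) • D^[(i + 1) - r] m with hg
    have hT : ∑ r ∈ Finset.range (i + 1 + 1), (((i + 1).choose r : F) * dd^[r] h) • D^[(i + 1) - r] m
        = ∑ r ∈ Finset.range (i + 1),
            (((i.choose r : F) * dd^[r + 1] h) • D^[i - r] m
              + ((i.choose (r + 1) : F) * dd^[r + 1] h) • D^[i - r] m) + g 0 := by
      rw [Finset.sum_range_succ' (fun r => (((i + 1).choose r : F) * dd^[r] h) • D^[(i + 1) - r] m) (i + 1)]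
      congr 1
      · refine Finset.sum_congr rfl fun r hr => ?_
        rw [Finset.mem_range] at hr
        have hsub : (i + 1) - (r + 1) = i - r := by omega
        rw [hsub, Nat.choose_succ_succ, Nat.cast_add, add_mul, add_smul]
      · simp [hg]
    rw [hT, Finset.sum_add_distrib, add_assoc]
    congr 1
    have h3 : ∑ r ∈ Finset.range (i + 1), ((i.choose (r + 1) : F) * dd^[r + 1] h) • D^[i - r] m
        = ∑ r ∈ Finset.range (i + 1), g (r + 1) := by
      refine Finset.sum_congr rfl fun r hr => ?_
      rw [Finset.mem_range] at hr
      have hsub : (i + 1) - (r + 1) = i - r := by omega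
      rw [hg]
      simp only [hsub]
    have hgtop : g (i + 1) = 0 := by
      rw [hg]
      simp [Nat.choose_succ_self]
    rw [h3, ← Finset.sum_range_succ' g (i + 1), Finset.sum_range_succ g (i + 1), hgtop, add_zero]

end Stmt4Aux


/-- Existence of a cyclic basis for a differential module of dimension μ over a field F
with a derivation admitting an element of derivative 1, provided char F = 0 or μ ≤ char F. -/
theorem stmt_4 {F M : Type*} [Field F] [AddCommGroup M] [Module F M]
    (dd : F → F)
    (hddadd : ∀ f g : F, dd (f + g) = dd f + dd g)
    (hddmul : ∀ f g : F, dd (f * g) = f * dd g + g * dd f)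
    (hx : ∃ x : F, dd x = 1)
    (μ : ℕ) [FiniteDimensional F M] (hdim : Module.finrank F M = μ)
    (D : M → M)
    (hDadd : ∀ m m' : M, D (m + m') = D m + D m')
    (hDLeib : ∀ (f : F) (m : M), D (f • m) = dd f • m + f • D m)
    (hchar : ringChar F = 0 ∨ μ ≤ ringChar F) :
    ∃ m : M, LinearIndependent F (fun i : Fin μ => D^[(i : ℕ)] m) ∧
      Submodule.span F (Set.range fun i : Fin μ => D^[(i : ℕ)] m) = ⊤ := by
  classical
  obtain ⟨x, hx⟩ := hx
  by_cases hμ0 : μ = 0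
  · subst hμ0
    refine ⟨0, linearIndependent_empty_type, ?_⟩
    have hsub : Subsingleton M := Module.finrank_zero_iff.mp hdim
    refine Submodule.eq_top_iff'.mpr fun m => ?_
    rw [Subsingleton.elim m 0]
    exact Submodule.zero_mem _
  -- characteristic facts
  have hfact : ∀ j : ℕ, j < μ → (j.factorial : F) ≠ 0 := by
    rcases hchar with h0 | hle
    · have hcp : CharP F 0 := h0 ▸ ringChar.charP F
      have : CharZero F := CharP.charP_to_charZero F
      intro j _
      exact_mod_cast Nat.cast_ne_zero.mpr j.factorial_ne_zero
    · intro j hj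
      have hp : (ringChar F).Prime := by
        rcases CharP.char_is_prime_or_zero F (ringChar F) with h | h
        · exact h
        · omega
      have hnd : ¬ (ringChar F) ∣ j.factorial := by
        rw [Nat.Prime.dvd_factorial hp]
        omega
      exact fun hc => hnd ((CharP.cast_eq_zero_iff F (ringChar F) _).mp hc)
  have hconst : ∃ c : ℕ → F, Function.Injective c ∧ ∀ n, dd (c n) = 0 := by
    rcases hchar with h0 | hle
    · have hcp : CharP F 0 := h0 ▸ ringChar.charP F
      have : CharZero F := CharP.charP_to_charZero F
      exact ⟨fun n => (n : F), Nat.cast_injective, fun n => Stmt4Aux.dd_natCast dd hddadd hddmul n⟩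
    · set p := ringChar F with hpdef
      have hcp : CharP F p := ringChar.charP F
      have hp : p.Prime := by
        rcases CharP.char_is_prime_or_zero F p with h | h
        · exact h
        · omega
      haveI : Fact p.Prime := ⟨hp⟩
      have hp2 : 2 ≤ p := hp.two_le
      have hxne : x ≠ 0 := by
        intro h
        rw [h, Stmt4Aux.dd_zero dd hddadd] at hx
        exact zero_ne_one hx
      have key : ∀ t : ℕ, 0 < t → x ^ t ≠ 1 := by
        intro t
        induction t using Nat.strong_induction_on with
        | _ t ih =>
          intro ht h1
          by_cases hdvd : p ∣ t
          · obtain ⟨t', rfl⟩ := hdvd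
            have ht' : 0 < t' := by
              rcases Nat.eq_zero_or_pos t' with rfl | h
              · simp at ht
              · exact h
            have hfrob : (x ^ t' - 1) ^ p = 0 := by
              rw [sub_pow_char, one_pow, ← pow_mul, mul_comm t' p, h1, sub_self]
            have hz : x ^ t' - 1 = 0 := by
              have := pow_eq_zero_iff (n := p) (by omega) |>.mp hfrob
              exact this
            have hlt : t' < p * t' := by
              have h2t : 2 * t' ≤ p * t' := Nat.mul_le_mul_right t' hp2
              omega
            exact ih t' hlt ht' (by rwa [sub_eq_zero] at hz)
          · rcases Nat.exists_eq_succ_of_ne_zero (Nat.pos_iff_ne_zero.mp ht) with ⟨s, rfl⟩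
            have h2 : dd (x ^ (s + 1)) = (s + 1 : F) * x ^ s :=
              Stmt4Aux.dd_pow_succ dd hddmul hx s
            rw [h1, Stmt4Aux.dd_one dd hddmul] at h2
            have hcastne : ((s + 1 : ℕ) : F) ≠ 0 := by
              rw [Ne, CharP.cast_eq_zero_iff F p]
              exact hdvd
            have hxs : x ^ s = 0 := by
              have h3 : (s + 1 : F) * x ^ s = 0 := h2.symm
              rcases mul_eq_zero.mp h3 with h | h
              · exact absurd (by push_cast; exact h) hcastne
              · exact h
            rcases Nat.eq_zero_or_pos s with rfl | hs
            · rw [pow_zero] at hxs; exact one_ne_zero hxs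
            · exact hxne (pow_eq_zero_iff (Nat.pos_iff_ne_zero.mp hs) |>.mp hxs)
      have hinj2 : ∀ a b : ℕ, a < b → x ^ (p * a) ≠ x ^ (p * b) := by
        intro a b hab heq
        apply key (p * (b - a)) (Nat.mul_pos (by omega) (by omega))
        have hexp : p * a + p * (b - a) = p * b := by
          have hba : a + (b - a) = b := by omega
          rw [← Nat.mul_add, hba]
        have h1 : x ^ (p * a) * x ^ (p * (b - a)) = x ^ (p * a) * 1 := by
          rw [mul_one, ← pow_add, hexp, heq]
        exact mul_left_cancel₀ (pow_ne_zero _ hxne) h1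
      refine ⟨fun n => x ^ (p * n), ?_, ?_⟩
      · intro a b hab
        rcases lt_trichotomy a b with h | h | h
        · exact absurd hab (hinj2 a b h)
        · exact h
        · exact absurd hab.symm (hinj2 b a h)
      · intro n
        show dd (x ^ (p * n)) = 0
        rcases Nat.eq_zero_or_pos (p * n) with h | h
        · rw [h, pow_zero]; exact Stmt4Aux.dd_one dd hddmul
        · rcases Nat.exists_eq_succ_of_ne_zero (Nat.pos_iff_ne_zero.mp h) with ⟨s, hs⟩
          rw [hs, Stmt4Aux.dd_pow_succ dd hddmul hx]
          have hz : ((s + 1 : ℕ) : F) = 0 := by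
            rw [CharP.cast_eq_zero_iff F p, ← Nat.succ_eq_add_one, ← hs]
            exact ⟨n, rfl⟩
          push_cast at hz
          rw [hz, zero_mul]
  obtain ⟨cc, hccinj, hccdd⟩ := hconst
  set P : ℕ → Prop := fun l => ∃ v : M, LinearIndependent F (fun i : Fin l => D^[(i : ℕ)] v)
    with hPdef
  have hP0 : P 0 := ⟨0, linearIndependent_empty_type⟩
  have hPk : P (Nat.findGreatest P μ) := Nat.findGreatest_spec (Nat.zero_le μ) hP0
  set k := Nat.findGreatest P μ with hkdef
  obtain ⟨e, he⟩ := hPk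
  have hkle : k ≤ μ := Nat.findGreatest_le μ
  by_cases hkμ : k = μ
  · rw [hkμ] at he
    haveI : Nonempty (Fin μ) := Fin.pos_iff_nonempty.mp (Nat.pos_of_ne_zero hμ0)
    have hcard : Fintype.card (Fin μ) = finrank F M := by rw [Fintype.card_fin, hdim]
    refine ⟨e, he, ?_⟩
    have hb : ⇑(basisOfLinearIndependentOfCardEqFinrank he hcard)
        = fun i : Fin μ => D^[(i : ℕ)] e :=
      coe_basisOfLinearIndependentOfCardEqFinrank he hcard
    rw [← hb]
    exact (basisOfLinearIndependentOfCardEqFinrank he hcard).span_eq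
  exfalso
  have hklt : k < μ := lt_of_le_of_ne hkle hkμ
  have hnotli : ∀ v : M, ¬ LinearIndependent F (fun i : Fin (k + 1) => D^[(i : ℕ)] v) := by
    intro v hv
    have hPk1 : P (k + 1) := ⟨v, hv⟩
    exact Nat.findGreatest_is_greatest (P := P) (n := μ) (by omega) (by omega) hPk1
  set W := Submodule.span F (Set.range fun i : Fin k => D^[(i : ℕ)] e) with hWdef
  have hWne : W ≠ ⊤ := by
    intro hW
    have h1 : finrank F W ≤ k := by
      have := finrank_range_le_card (R := F) (fun i : Fin k => D^[(i : ℕ)] e)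
      simpa [Set.finrank] using this
    rw [hW, finrank_top, hdim] at h1
    omega
  have hexf : ∃ f, f ∉ W := by
    by_contra h
    push_neg at h
    exact hWne (Submodule.eq_top_iff'.mpr h)
  obtain ⟨f, hf⟩ := hexf
  have hsnoc : LinearIndependent F (Fin.snoc (fun i : Fin k => D^[(i : ℕ)] e) f : Fin (k + 1) → M) :=
    linearIndependent_fin_snoc.mpr ⟨he, hf⟩
  set w : Fin (k + 1) → M := Fin.snoc (fun i : Fin k => D^[(i : ℕ)] e) f with hwdef
  set p' := Submodule.span F (Set.range w) with hp'def
  obtain ⟨q, hq⟩ := Submodule.exists_isCompl p'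
  set π := Submodule.linearProjOfIsCompl p' q hq with hπdef
  set bw := Basis.span hsnoc with hbwdef
  set coords : M →ₗ[F] (Fin (k + 1) → F) :=
    (Finsupp.linearEquivFunOnFinite F F (Fin (k + 1))).toLinearMap ∘ₗ (bw.repr.toLinearMap ∘ₗ π)
    with hcoordsdef
  set φ : M [⋀^Fin (k + 1)]→ₗ[F] F := ((Pi.basisFun F (Fin (k + 1))).det).compLinearMap coords
    with hφdef
  have hφw : φ w = 1 := by
    have hcw : ∀ i, coords (w i) = Pi.single i 1 := by
      intro i
      have hmem : w i ∈ p' := Submodule.subset_span (Set.mem_range_self i)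
      have h1 : π (w i) = ⟨w i, hmem⟩ :=
        Submodule.linearProjOfIsCompl_apply_left hq ⟨w i, hmem⟩
      have h2 : (⟨w i, hmem⟩ : p') = bw i := by
        apply Subtype.ext
        rw [hbwdef]
        exact congrArg Subtype.val (Basis.span_apply hsnoc i).symm
      rw [hcoordsdef]
      simp only [LinearMap.comp_apply, LinearEquiv.coe_toLinearMap, h1, h2, Basis.repr_self]
      exact Finsupp.linearEquivFunOnFinite_single F F _ i 1
    rw [hφdef, AlternatingMap.compLinearMap_apply]
    have hcweq : (fun i => coords (w i)) = ⇑(Pi.basisFun F (Fin (k + 1))) := by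
      funext i
      rw [hcw i, Pi.basisFun_apply]
    rw [hcweq, Basis.det_self]
  set a : Fin (k + 1) → M := fun i => D^[(i : ℕ)] e with hadef
  -- Step A
  have stepA : ∀ g : M, ∑ i : Fin (k + 1), φ (Function.update a i (D^[(i : ℕ)] g)) = 0 := by
    intro g
    set b : Fin (k + 1) → M := fun i => D^[(i : ℕ)] g with hbdef
    set co : Finset (Fin (k + 1)) → F := fun S => φ (S.piecewise b a) with hcodef
    set Pl : Polynomial F :=
      ∑ S : Finset (Fin (k + 1)), Polynomial.C (co S) * Polynomial.X ^ S.card with hPldef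
    have heval : ∀ t : F, dd t = 0 → Pl.eval t = 0 := by
      intro t ht
      have hdep := AlternatingMap.map_linearDependent φ
        (fun i : Fin (k + 1) => D^[(i : ℕ)] (e + t • g)) (hnotli (e + t • g))
      have hfun : (fun i : Fin (k + 1) => D^[(i : ℕ)] (e + t • g))
          = (a + fun i => t • b i) := by
        funext i
        simp only [Pi.add_apply, hadef, hbdef]
        rw [Stmt4Aux.D_iter_add D hDadd, Stmt4Aux.D_iter_const_smul dd D hDLeib ht]
      rw [hfun] at hdep
      have hexp : φ (a + fun i => t • b i) = ∑ S : Finset (Fin (k + 1)), t ^ S.card * co S := by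
        show φ.toMultilinearMap (a + fun i => t • b i) = _
        have hcomm : (a + fun i => t • b i) = ((fun i => t • b i) + a) := add_comm _ _
        rw [hcomm, MultilinearMap.map_add_univ]
        refine Finset.sum_congr rfl fun S _ => ?_
        have hpiece : S.piecewise (fun i => t • b i) a
            = S.piecewise (fun i => t • (S.piecewise b a) i) (S.piecewise b a) := by
          funext i
          by_cases hi : i ∈ S <;> simp [Finset.piecewise, hi]
        rw [hpiece, MultilinearMap.map_piecewise_smul]
        rw [Finset.prod_const]
        rfl
      have heq : Pl.eval t = ∑ S : Finset (Fin (k + 1)), co S * t ^ S.card := by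
        rw [hPldef]
        simp [Polynomial.eval_finset_sum]
      rw [heq]
      calc ∑ S : Finset (Fin (k + 1)), co S * t ^ S.card
          = ∑ S : Finset (Fin (k + 1)), t ^ S.card * co S := by
            exact Finset.sum_congr rfl fun S _ => mul_comm _ _
        _ = φ (a + fun i => t • b i) := hexp.symm
        _ = 0 := hdep
    have hPl0 : Pl = 0 := by
      apply Polynomial.eq_zero_of_infinite_isRoot
      apply Set.infinite_of_injective_forall_mem hccinj
      intro n
      exact heval (cc n) (hccdd n)
    have hco : ∑ S : Finset (Fin (k + 1)), (if S.card = 1 then co S else 0) = 0 := by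
      have hc1 := congrArg (fun q : Polynomial F => q.coeff 1) hPl0
      simp only [hPldef, Polynomial.finset_sum_coeff, Polynomial.coeff_zero,
        Polynomial.coeff_C_mul, Polynomial.coeff_X_pow] at hc1
      calc ∑ S : Finset (Fin (k + 1)), (if S.card = 1 then co S else 0)
          = ∑ S : Finset (Fin (k + 1)), co S * (if 1 = S.card then 1 else 0) := by
            refine Finset.sum_congr rfl fun S _ => ?_
            by_cases h : S.card = 1
            · rw [if_pos h, if_pos h.symm, mul_one]
            · rw [if_neg h, if_neg (fun hh => h hh.symm), mul_zero]
        _ = 0 := hc1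
    have hsing : ∑ S : Finset (Fin (k + 1)), (if S.card = 1 then co S else 0)
        = ∑ i : Fin (k + 1), co {i} := by
      rw [← Finset.sum_filter]
      have himg : (Finset.univ.filter (fun S : Finset (Fin (k + 1)) => S.card = 1))
          = Finset.univ.image (fun i : Fin (k + 1) => ({i} : Finset (Fin (k + 1)))) := by
        ext S
        rw [Finset.mem_filter, Finset.mem_image]
        constructor
        · rintro ⟨-, hS⟩
          obtain ⟨i, hi⟩ := Finset.card_eq_one.mp hS
          exact ⟨i, Finset.mem_univ i, hi.symm⟩
        · rintro ⟨i, -, rfl⟩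
          exact ⟨Finset.mem_univ _, Finset.card_singleton i⟩
      rw [himg, Finset.sum_image (fun i _ j _ h => Finset.singleton_injective h)]
    rw [hsing] at hco
    calc ∑ i : Fin (k + 1), φ (Function.update a i (D^[(i : ℕ)] g))
        = ∑ i : Fin (k + 1), co {i} := by
          refine Finset.sum_congr rfl fun i _ => ?_
          rw [hcodef]
          simp only [Finset.piecewise_singleton]
          rfl
      _ = 0 := hco
  -- Step B
  have stepB : ∀ j : ℕ,
      ∑ r ∈ Finset.range (k + 1), ((j.descFactorial r : F) * x ^ (j - r)) *
        (∑ i : Fin (k + 1), ((i : ℕ).choose r : F)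
          * φ (Function.update a i (D^[(i : ℕ) - r] f))) = 0 := by
    intro j
    have h0 := stepA (x ^ j • f)
    rw [← h0]
    calc ∑ r ∈ Finset.range (k + 1), ((j.descFactorial r : F) * x ^ (j - r)) *
          (∑ i : Fin (k + 1), ((i : ℕ).choose r : F)
            * φ (Function.update a i (D^[(i : ℕ) - r] f)))
        = ∑ r ∈ Finset.range (k + 1), ∑ i : Fin (k + 1),
            (((i : ℕ).choose r : F) * ((j.descFactorial r : F) * x ^ (j - r)))
              * φ (Function.update a i (D^[(i : ℕ) - r] f)) := by
          refine Finset.sum_congr rfl fun r _ => ?_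
          rw [Finset.mul_sum]
          exact Finset.sum_congr rfl fun i _ => by ring
      _ = ∑ i : Fin (k + 1), ∑ r ∈ Finset.range (k + 1),
            (((i : ℕ).choose r : F) * ((j.descFactorial r : F) * x ^ (j - r)))
              * φ (Function.update a i (D^[(i : ℕ) - r] f)) := Finset.sum_comm
      _ = ∑ i : Fin (k + 1), ∑ r ∈ Finset.range ((i : ℕ) + 1),
            (((i : ℕ).choose r : F) * ((j.descFactorial r : F) * x ^ (j - r)))
              * φ (Function.update a i (D^[(i : ℕ) - r] f)) := by
          refine Finset.sum_congr rfl fun i _ => (Finset.sum_subset ?_ ?_).symm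
          · intro r hr
            rw [Finset.mem_range] at hr ⊢
            have := i.isLt
            omega
          · intro r hr hnr
            rw [Finset.mem_range] at hr hnr
            have hlt : (i : ℕ) < r := by omega
            rw [Nat.choose_eq_zero_of_lt hlt]
            simp
      _ = ∑ i : Fin (k + 1), φ (Function.update a i (D^[(i : ℕ)] (x ^ j • f))) := by
          refine Finset.sum_congr rfl fun i _ => ?_
          rw [Stmt4Aux.D_iter_smul dd D hddadd hddmul hDadd hDLeib (i : ℕ) (x ^ j) f]
          have h1 : ∀ y : M, φ (Function.update a i y)
              = (φ.toMultilinearMap.toLinearMap a i) y := by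
            intro y
            simp [MultilinearMap.toLinearMap_apply]
          rw [h1, map_sum]
          refine Finset.sum_congr rfl fun r _ => ?_
          rw [map_smul, ← h1, smul_eq_mul,
            Stmt4Aux.dd_iter_pow dd hddadd hddmul hx j r]
  -- Step C
  have stepC : ∀ j : ℕ, j ≤ k →
      (∑ i : Fin (k + 1), ((i : ℕ).choose j : F)
        * φ (Function.update a i (D^[(i : ℕ) - j] f))) = 0 := by
    intro j
    induction j using Nat.strong_induction_on with
    | _ j ih =>
      intro hjk
      have hB := stepB j
      rw [Finset.sum_eq_single_of_mem j (by rw [Finset.mem_range]; omega) ?_] at hB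
      · rw [Nat.descFactorial_self, Nat.sub_self, pow_zero, mul_one] at hB
        refine (mul_eq_zero.mp hB).resolve_left ?_
        exact hfact j (by omega)
      · intro r hr hrj
        rcases Nat.lt_or_ge r j with h | h
        · rw [ih r h (by omega), mul_zero]
        · have hlt : j < r := by omega
          rw [Nat.descFactorial_eq_zero_iff_lt.mpr hlt]
          simp
  -- conclusion
  have hlast := stepC k le_rfl
  rw [Finset.sum_eq_single_of_mem (Fin.last k) (Finset.mem_univ _) ?_] at hlast
  · rw [Fin.val_last, Nat.choose_self, Nat.cast_one, one_mul, Nat.sub_self,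
      Function.iterate_zero_apply] at hlast
    have hupd : Function.update a (Fin.last k) f = w := by
      funext i
      rcases eq_or_ne i (Fin.last k) with rfl | hne
      · rw [Function.update_self, hwdef]
        simp
      · rw [Function.update_of_ne hne]
        obtain ⟨j, rfl⟩ := Fin.exists_castSucc_eq.mpr hne
        rw [hwdef]
        rw [Fin.snoc_castSucc]
        rfl
    rw [hupd, hφw] at hlast
    exact one_ne_zero hlast
  · intro i _ hne
    have hlt : (i : ℕ) < k := Fin.val_lt_last hne
    rw [Nat.choose_eq_zero_of_lt hlt, Nat.cast_zero, zero_mul]
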